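/- For a circle partitioned into n ≥ 3 arcs by n marked points, the number of disjoint pairs among the n side disks is at least (n−2)(n−3)/2. -/

import Mathlib

open EuclideanGeometry Metric Real


noncomputable def circlePt (O : EuclideanSpace ℝ (Fin 2)) (r θ : ℝ) :
    EuclideanSpace ℝ (Fin 2) :=
  O + r • (WithLp.equiv 2 (Fin 2 → ℝ)).symm ![Real.cos θ, Real.sin θ]

lemma dist_circlePt (O : EuclideanSpace ℝ (Fin 2)) {r : ℝ} (hr : 0 ≤ r) (u v : ℝ) :
    dist (circlePt O r u) (circlePt O r v) = 2 * r * |Real.sin ((u - v) / 2)| := by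
  unfold circlePt
  rw [dist_add_left, dist_smul₀, Real.norm_eq_abs, abs_of_nonneg hr]
  rw [EuclideanSpace.dist_eq]
  have h2 : ∀ i, ((WithLp.equiv 2 (Fin 2 → ℝ)).symm ![Real.cos u, Real.sin u]) i
      = (![Real.cos u, Real.sin u] : Fin 2 → ℝ) i := fun i => rfl
  simp only [WithLp.equiv_symm_apply, PiLp.toLp_apply, Fin.sum_univ_two, Real.dist_eq]
  simp only [Matrix.cons_val_zero, Matrix.cons_val_one, Matrix.head_cons, sq_abs]
  have key : (Real.cos u - Real.cos v) ^ 2 + (Real.sin u - Real.sin v) ^ 2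
      = (2 * Real.sin ((u - v)/2)) ^ 2 := by
    have h1 : Real.cos (u - v) = Real.cos u * Real.cos v + Real.sin u * Real.sin v :=
      Real.cos_sub u v
    have h3 : Real.cos (2 * ((u - v)/2)) = 1 - 2 * Real.sin ((u-v)/2) ^ 2 := by
      rw [Real.cos_two_mul]
      have := Real.sin_sq_add_cos_sq ((u-v)/2); linarith
    rw [show 2 * ((u - v)/2) = u - v by ring] at h3
    have pu := Real.sin_sq_add_cos_sq u
    have pv := Real.sin_sq_add_cos_sq v
    nlinarith [h1, h3, pu, pv]
  rw [key, Real.sqrt_sq_eq_abs, abs_mul]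
  rw [abs_of_nonneg (by norm_num : (0:ℝ) ≤ 2)]
  ring


lemma sin_half_prod (a c : ℝ) :
    Real.sin a + Real.sin c - Real.sin (a + c)
      = 4 * Real.sin (a/2) * Real.sin (c/2) * Real.sin ((a+c)/2) := by
  have h1 : Real.sin a + Real.sin c = 2 * Real.sin ((a+c)/2) * Real.cos ((a-c)/2) := by
    have := Real.sin_sub_sin a (-c)
    rw [Real.sin_neg, show a - -c = a + c by ring, show a + -c = a - c by ring] at this
    linarith
  have h2 : Real.sin (a + c) = 2 * Real.sin ((a+c)/2) * Real.cos ((a+c)/2) := by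
    have := Real.sin_two_mul ((a+c)/2)
    rw [show 2 * ((a+c)/2) = a + c by ring] at this; linarith
  have h3 := Real.cos_sub_cos ((a-c)/2) ((a+c)/2)
  rw [show ((a-c)/2 + (a+c)/2) / 2 = a/2 by ring,
      show ((a-c)/2 - (a+c)/2) / 2 = -(c/2) by ring, Real.sin_neg] at h3
  rw [h1, h2]
  linear_combination (2 * Real.sin ((a+c)/2)) * h3

lemma sin_shift (Y e : ℝ) :
    Real.sin (Y + e) = Real.sin (Y - e) + 2 * Real.cos Y * Real.sin e := by
  rw [Real.sin_add, Real.sin_sub]; ring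

-- key trig lemma
set_option maxHeartbeats 1000000 in
lemma key_trig (a b c d A B : ℝ) (ha : 0 < a) (hb : 0 < b) (hc : 0 < c) (hd : 0 < d)
    (hs : a + b + c + d ≤ π / 2)
    (hA1 : a + 2*b + c ≤ A) (hA2 : A ≤ π - (a + 2*d + c))
    (hB1 : b + 2*c + d ≤ B) (hB2 : B ≤ π - (b + 2*a + d))
    (h1 : Real.sin A ≤ Real.sin a + Real.sin c)
    (h2 : Real.sin B ≤ Real.sin b + Real.sin d) : False := by
  have pi_pos := Real.pi_pos
  -- step: from badness on (x,z) with intermediate arcs e (fwd) and f (bwd) get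
  -- 2 sin e' * sin f' ≤ 4 sin(x/2) sin(z/2) sin((x+z)/2)  for the OTHER pair's sines
  have main : ∀ x z e f X : ℝ, 0 < x → 0 < z → 0 < e → 0 < f →
      x + z + e + f ≤ π/2 →
      x + 2*e + z ≤ X → X ≤ π - (x + 2*f + z) →
      Real.sin X ≤ Real.sin x + Real.sin z →
      2 * (Real.sin e * Real.sin f) ≤
        4 * Real.sin (x/2) * Real.sin (z/2) * Real.sin ((x+z)/2) := by
    intro x z e f X hx hz he hf hsum hX1 hX2 hXbad
    have hend : Real.sin (x + 2*e + z) ≤ Real.sin x + Real.sin z ∨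
        Real.sin (x + 2*f + z) ≤ Real.sin x + Real.sin z := by
      rcases le_or_gt X (π/2) with hXle | hXgt
      · left
        have := Real.sin_le_sin_of_le_of_le_pi_div_two
          (by linarith : -(π/2) ≤ x + 2*e + z) hXle hX1
        linarith
      · right
        have hs2 : Real.sin X = Real.sin (π - X) := (Real.sin_pi_sub X).symm
        have := Real.sin_le_sin_of_le_of_le_pi_div_two
          (by linarith : -(π/2) ≤ x + 2*f + z) (by linarith : π - X ≤ π/2)
          (by linarith : x + 2*f + z ≤ π - X)
        rw [← hs2] at this; linarith
    have hid := sin_half_prod x z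
    rcases hend with hE | hE
    · -- e used; cos(x+z+e) ≥ sin f
      have hsh := sin_shift (x + z + e) e
      rw [show x + z + e + e = x + 2*e + z by ring,
          show x + z + e - e = x + z by ring] at hsh
      have hcos : Real.sin f ≤ Real.cos (x + z + e) := by
        have h := Real.cos_le_cos_of_nonneg_of_le_pi
          (by linarith : (0:ℝ) ≤ x + z + e) (by linarith : π/2 - f ≤ π)
          (by linarith : x + z + e ≤ π/2 - f)
        rwa [Real.cos_pi_div_two_sub] at h
      have hse : 0 ≤ Real.sin e := Real.sin_nonneg_of_nonneg_of_le_pi (le_of_lt he) (by linarith)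
      have : 2 * (Real.sin f * Real.sin e) ≤ 2 * (Real.cos (x+z+e) * Real.sin e) := by
        nlinarith
      nlinarith
    · -- f used; cos(x+z+f) ≥ sin e
      have hsh := sin_shift (x + z + f) f
      rw [show x + z + f + f = x + 2*f + z by ring,
          show x + z + f - f = x + z by ring] at hsh
      have hcos : Real.sin e ≤ Real.cos (x + z + f) := by
        have h := Real.cos_le_cos_of_nonneg_of_le_pi
          (by linarith : (0:ℝ) ≤ x + z + f) (by linarith : π/2 - e ≤ π)
          (by linarith : x + z + f ≤ π/2 - e)
        rwa [Real.cos_pi_div_two_sub] at h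
      have hsf : 0 ≤ Real.sin f := Real.sin_nonneg_of_nonneg_of_le_pi (le_of_lt hf) (by linarith)
      have : 2 * (Real.sin e * Real.sin f) ≤ 2 * (Real.cos (x+z+f) * Real.sin f) := by
        nlinarith
      nlinarith
  have i1 := main a c b d A ha hc hb hd (by linarith) (by linarith) (by linarith) h1
  have i2 := main b d c a B hb hd hc ha (by linarith) (by linarith) (by linarith) h2
  -- now extract contradiction
  set sa := Real.sin (a/2); set ca := Real.cos (a/2)
  set sb := Real.sin (b/2); set cb := Real.cos (b/2)
  set sc := Real.sin (c/2); set cc := Real.cos (c/2)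
  set sd := Real.sin (d/2); set cd := Real.cos (d/2)
  have hq : Real.sqrt 2 / 2 > 0 := by positivity
  have hq2 : (Real.sqrt 2 / 2)^2 = 1/2 := by
    rw [div_pow, Real.sq_sqrt (by norm_num : (2:ℝ) ≥ 0)]; norm_num
  have halfpos : ∀ x : ℝ, 0 < x → x + x ≤ π → 0 < Real.sin (x/2) := by
    intro x hx hxp
    exact Real.sin_pos_of_pos_of_lt_pi (by linarith) (by linarith)
  have hsa : 0 < sa := halfpos a ha (by linarith)
  have hsb : 0 < sb := halfpos b hb (by linarith)
  have hsc : 0 < sc := halfpos c hc (by linarith)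
  have hsd : 0 < sd := halfpos d hd (by linarith)
  have hcosge : ∀ x : ℝ, 0 < x → x ≤ π/2 → Real.sqrt 2 / 2 ≤ Real.cos (x/2) := by
    intro x hx hxp
    have h := Real.cos_le_cos_of_nonneg_of_le_pi
      (by linarith : (0:ℝ) ≤ x/2) (by linarith : π/4 ≤ π) (by linarith : x/2 ≤ π/4)
    rwa [Real.cos_pi_div_four] at h
  have hca : Real.sqrt 2/2 ≤ ca := hcosge a ha (by linarith)
  have hcb : Real.sqrt 2/2 ≤ cb := hcosge b hb (by linarith)
  have hcc : Real.sqrt 2/2 ≤ cc := hcosge c hc (by linarith)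
  have hcd : Real.sqrt 2/2 ≤ cd := hcosge d hd (by linarith)
  have hsinle : ∀ x y : ℝ, 0 < x → 0 < y → x + y ≤ π/2 →
      Real.sin ((x+y)/2) ≤ Real.sqrt 2/2 ∧ 0 < Real.sin ((x+y)/2) := by
    intro x y hx hy hxy
    constructor
    · have := Real.sin_le_sin_of_le_of_le_pi_div_two
        (by linarith : -(π/2) ≤ (x+y)/2) (by linarith : π/4 ≤ π/2)
        (by linarith : (x+y)/2 ≤ π/4)
      rwa [Real.sin_pi_div_four] at this
    · exact Real.sin_pos_of_pos_of_lt_pi (by linarith) (by linarith)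
  obtain ⟨hS1le, hS1pos⟩ := hsinle a c ha hc (by linarith)
  obtain ⟨hS2le, hS2pos⟩ := hsinle b d hb hd (by linarith)
  set S1 := Real.sin ((a+c)/2); set S2 := Real.sin ((b+d)/2)
  have edouble : ∀ x : ℝ, Real.sin x = 2 * Real.sin (x/2) * Real.cos (x/2) := by
    intro x
    have := Real.sin_two_mul (x/2)
    rw [show 2 * (x/2) = x by ring] at this; linarith
  rw [edouble b, edouble d] at i1
  rw [edouble c, edouble a] at i2
  have hcapos : (0:ℝ) < ca := lt_of_lt_of_le hq hca
  have hcbpos : (0:ℝ) < cb := lt_of_lt_of_le hq hcb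
  have hccpos : (0:ℝ) < cc := lt_of_lt_of_le hq hcc
  have hcdpos : (0:ℝ) < cd := lt_of_lt_of_le hq hcd
  have i1' : 8*(sb*cb*sd*cd) ≤ 4*(sa*sc*S1) := by linarith [i1]
  have i2' : 8*(sa*ca*sc*cc) ≤ 4*(sb*sd*S2) := by linarith [i2]
  have hnn1 : (0:ℝ) ≤ 8*(sa*ca*sc*cc) := by
    have := mul_pos (mul_pos (mul_pos hsa hcapos) hsc) hccpos; linarith
  have hnn2 : (0:ℝ) ≤ 4*(sa*sc*S1) := by
    have := mul_pos (mul_pos hsa hsc) hS1pos; linarith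
  have hmul := mul_le_mul i1' i2' hnn1 hnn2
  have ht : (0:ℝ) < 16 * (sa*sb*sc*sd) := by
    have := mul_pos (mul_pos (mul_pos hsa hsb) hsc) hsd; linarith
  have hstep : 16*(sa*sb*sc*sd) * (4*(ca*cb*cc*cd)) ≤ 16*(sa*sb*sc*sd) * (S1*S2) := by
    nlinarith [hmul]
  have hprod : 4*(ca*cb*cc*cd) ≤ S1*S2 := le_of_mul_le_mul_left hstep ht
  have h12 : 1/2 ≤ ca*cb := by
    have := mul_le_mul hca hcb hq.le (hq.le.trans hca)
    nlinarith [hq2]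
  have h34 : 1/2 ≤ cc*cd := by
    have := mul_le_mul hcc hcd hq.le (hq.le.trans hcc)
    nlinarith [hq2]
  have hcabcd : (1:ℝ)/4 ≤ ca*cb*cc*cd := by
    have := mul_le_mul h12 h34 (by norm_num) (by linarith)
    nlinarith [this]
  have hS12 : S1*S2 ≤ 1/2 := by
    have := mul_le_mul hS1le hS2le hS2pos.le hq.le
    nlinarith [hq2]
  linarith

noncomputable def sideDisk (O : EuclideanSpace ℝ (Fin 2)) (r a b : ℝ) :
    Set (EuclideanSpace ℝ (Fin 2)) :=
  Metric.closedBall (circlePt O r ((a + b) / 2))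
    (dist (circlePt O r ((a + b) / 2)) (circlePt O r a))

set_option maxHeartbeats 800000 in
lemma key_geom (O : EuclideanSpace ℝ (Fin 2)) {r : ℝ} (hr : 0 < r)
    {n : ℕ} (hn : 3 ≤ n) (θ : ℕ → ℝ) (hmono : StrictMono θ)
    (hper : ∀ m, θ (m + n) = θ m + 2 * π)
    {i j k l : ℕ} (hij : i < j) (hjk : j < k) (hkl : k < l) (hln : l < n)
    (H1 : (sideDisk O r (θ i) (θ (i+1)) ∩ sideDisk O r (θ k) (θ (k+1))).Nonempty)
    (H2 : (sideDisk O r (θ j) (θ (j+1)) ∩ sideDisk O r (θ l) (θ (l+1))).Nonempty) :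
    False := by
  have pi_pos := Real.pi_pos
  have hθn : θ n = θ 0 + 2 * π := by have := hper 0; simpa using this
  have mono := hmono.monotone
  -- the quarter arc lengths
  set a := (θ (i+1) - θ i) / 4 with hadef
  set b := (θ (j+1) - θ j) / 4 with hbdef
  set c := (θ (k+1) - θ k) / 4 with hcdef
  set d := (θ (l+1) - θ l) / 4 with hddef
  have ha : 0 < a := by have := hmono (lt_add_one i); simp only [hadef]; linarith
  have hb : 0 < b := by have := hmono (lt_add_one j); simp only [hbdef]; linarith
  have hc : 0 < c := by have := hmono (lt_add_one k); simp only [hcdef]; linarith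
  have hd : 0 < d := by have := hmono (lt_add_one l); simp only [hddef]; linarith
  have m1 : θ 0 ≤ θ i := mono (Nat.zero_le i)
  have m2 : θ (i+1) ≤ θ j := mono hij
  have m3 : θ (j+1) ≤ θ k := mono hjk
  have m4 : θ (k+1) ≤ θ l := mono hkl
  have m5 : θ (l+1) ≤ θ n := mono hln
  have hs : a + b + c + d ≤ π / 2 := by
    simp only [hadef, hbdef, hcdef, hddef]; linarith
  -- centers' half-angle differences
  set A := (θ k + θ (k+1) - θ i - θ (i+1)) / 4 with hAdef
  set B := (θ l + θ (l+1) - θ j - θ (j+1)) / 4 with hBdef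
  have hA1 : a + 2*b + c ≤ A := by
    simp only [hadef, hbdef, hcdef, hAdef]; linarith
  have hA2 : A ≤ π - (a + 2*d + c) := by
    simp only [hadef, hcdef, hddef, hAdef]; linarith
  have hB1 : b + 2*c + d ≤ B := by
    simp only [hbdef, hcdef, hddef, hBdef]; linarith
  have hB2 : B ≤ π - (b + 2*a + d) := by
    simp only [hadef, hbdef, hddef, hBdef]; linarith
  -- extract the two sin inequalities
  have habs : ∀ x : ℝ, 0 < x → x ≤ π/2 → |Real.sin x| = Real.sin x := fun x h1 h2 =>
    abs_of_nonneg (Real.sin_nonneg_of_nonneg_of_le_pi h1.le (by linarith))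
  have extract : ∀ p q : ℕ, p < q → q < n →
      (sideDisk O r (θ p) (θ (p+1)) ∩ sideDisk O r (θ q) (θ (q+1))).Nonempty →
      Real.sin ((θ q + θ (q+1) - θ p - θ (p+1)) / 4) ≤
        Real.sin ((θ (p+1) - θ p)/4) + Real.sin ((θ (q+1) - θ q)/4) := by
    intro p q hpq hqn H
    obtain ⟨x, hx1, hx2⟩ := H
    rw [sideDisk, Metric.mem_closedBall] at hx1 hx2
    have htri := dist_triangle (circlePt O r ((θ p + θ (p+1))/2)) x
        (circlePt O r ((θ q + θ (q+1))/2))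
    rw [dist_comm (circlePt O r ((θ p + θ (p+1))/2)) x] at htri
    have hd1 := dist_circlePt O hr.le ((θ p + θ (p+1))/2) (θ p)
    have hd2 := dist_circlePt O hr.le ((θ q + θ (q+1))/2) (θ q)
    have hd3 := dist_circlePt O hr.le ((θ p + θ (p+1))/2) ((θ q + θ (q+1))/2)
    have e1 : ((θ p + θ (p+1))/2 - θ p) / 2 = (θ (p+1) - θ p)/4 := by ring
    have e2 : ((θ q + θ (q+1))/2 - θ q) / 2 = (θ (q+1) - θ q)/4 := by ring
    have e3 : ((θ p + θ (p+1))/2 - (θ q + θ (q+1))/2) / 2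
        = -((θ q + θ (q+1) - θ p - θ (p+1)) / 4) := by ring
    rw [e1] at hd1; rw [e2] at hd2; rw [e3, Real.sin_neg, abs_neg] at hd3
    have hap : 0 < (θ (p+1) - θ p)/4 := by have := hmono (lt_add_one p); linarith
    have haq : 0 < (θ (q+1) - θ q)/4 := by have := hmono (lt_add_one q); linarith
    have hap2 : (θ (p+1) - θ p)/4 ≤ π/2 := by
      have h1 : θ (p+1) ≤ θ (p + n) := mono (by omega)
      have h2 := hper p
      linarith
    have haq2 : (θ (q+1) - θ q)/4 ≤ π/2 := by
      have h1 : θ (q+1) ≤ θ (q + n) := mono (by omega)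
      have h2 := hper q
      linarith
    rw [habs _ hap hap2] at hd1
    rw [habs _ haq haq2] at hd2
    have hfin : 2*r*|Real.sin ((θ q + θ (q+1) - θ p - θ (p+1)) / 4)| ≤
        2*r*Real.sin ((θ (p+1) - θ p)/4) + 2*r*Real.sin ((θ (q+1) - θ q)/4) := by
      rw [← hd1, ← hd2, ← hd3]; linarith
    have h2r : (0:ℝ) < 2*r := by linarith
    have hle := le_abs_self (Real.sin ((θ q + θ (q+1) - θ p - θ (p+1)) / 4))
    have hstep := mul_le_mul_of_nonneg_left hle h2r.le
    have hS : 2*r*(Real.sin ((θ q + θ (q+1) - θ p - θ (p+1)) / 4)) ≤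
        2*r*(Real.sin ((θ (p+1) - θ p)/4) + Real.sin ((θ (q+1) - θ q)/4)) := by linarith
    have := (mul_le_mul_iff_right₀ h2r).mp hS
    linarith
  have h1 := extract i k (by omega) (by omega) H1
  have h2 := extract j l (by omega) (by omega) H2
  exact key_trig a b c d A B ha hb hc hd hs hA1 hA2 hB1 hB2
    (by simpa only [hadef, hcdef, hAdef] using h1)
    (by simpa only [hbdef, hddef, hBdef] using h2)


lemma noncross_card (N : ℕ) : ∀ (lo hi : ℕ) (S : Finset (ℕ × ℕ)),
    hi - lo ≤ N →
    (∀ p ∈ S, lo ≤ p.1 ∧ p.1 + 2 ≤ p.2 ∧ p.2 ≤ hi) →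
    (∀ p ∈ S, ∀ q ∈ S, ¬(p.1 < q.1 ∧ q.1 < p.2 ∧ p.2 < q.2)) →
    S.card ≤ hi - lo - 1 := by
  induction N with
  | zero =>
    intro lo hi S hN hdom hcr
    have hS : S = ∅ := Finset.eq_empty_of_forall_notMem (fun p hp => by
      have := hdom p hp; omega)
    simp [hS]
  | succ N ih =>
    intro lo hi S hN hdom hcr
    rcases S.eq_empty_or_nonempty with rfl | ⟨p₀, hp₀⟩
    · simp
    have hlohi : lo + 2 ≤ hi := by have := hdom p₀ hp₀; omega
    set S' := S.erase (lo, hi) with hS'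
    have hSsub : S.card ≤ S'.card + 1 := by
      have hsub : S ⊆ insert (lo, hi) S' := by
        intro x hx
        by_cases h : x = (lo, hi)
        · simp [h]
        · exact Finset.mem_insert_of_mem (Finset.mem_erase.mpr ⟨h, hx⟩)
      calc S.card ≤ (insert (lo, hi) S').card := Finset.card_le_card hsub
        _ ≤ S'.card + 1 := Finset.card_insert_le _ _
    have hdom' : ∀ p ∈ S', lo ≤ p.1 ∧ p.1 + 2 ≤ p.2 ∧ p.2 ≤ hi :=
      fun p hp => hdom p (Finset.mem_of_mem_erase hp)
    have hcr' : ∀ p ∈ S', ∀ q ∈ S', ¬(p.1 < q.1 ∧ q.1 < p.2 ∧ p.2 < q.2) :=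
      fun p hp q hq => hcr p (Finset.mem_of_mem_erase hp) q (Finset.mem_of_mem_erase hq)
    by_cases hT : ∀ p ∈ S', p.2 ≠ hi
    · have h1 : S'.card ≤ (hi - 1) - lo - 1 :=
        ih lo (hi - 1) S' (by omega)
          (fun p hp => by have h := hdom' p hp; have := hT p hp; omega) hcr'
      omega
    · push_neg at hT
      obtain ⟨q₀, hq₀, hq₀2⟩ := hT
      set T := S'.filter (fun p => p.2 = hi) with hTdef
      have hTne : T.Nonempty := ⟨q₀, Finset.mem_filter.mpr ⟨hq₀, hq₀2⟩⟩
      have hTim : (T.image Prod.fst).Nonempty := hTne.image _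
      set i1 := (T.image Prod.fst).min' hTim with hi1def
      obtain ⟨w, hw, hw1⟩ := Finset.mem_image.mp ((T.image Prod.fst).min'_mem hTim)
      have hw2 : w.2 = hi := (Finset.mem_filter.mp hw).2
      have hwS' : (i1, hi) ∈ S' := by
        have : w = (i1, hi) := Prod.ext hw1 hw2
        rw [← this]; exact (Finset.mem_filter.mp hw).1
      have hmin : ∀ p ∈ T, i1 ≤ p.1 :=
        fun p hp => Finset.min'_le _ _ (Finset.mem_image_of_mem _ hp)
      have hi1lo : lo < i1 := by
        have hne : (i1, hi) ≠ (lo, hi) := (Finset.mem_erase.mp hwS').1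
        have : lo ≤ i1 := (hdom' _ hwS').1
        rcases this.lt_or_eq with h | h
        · exact h
        · exact absurd (by rw [← h]) hne
      have hi1hi : i1 + 2 ≤ hi := (hdom' _ hwS').2.1
      set S1 := S'.filter (fun p => p.2 ≤ i1) with hS1
      set S2 := S'.filter (fun p => i1 ≤ p.1) with hS2
      have hcover : S' ⊆ S1 ∪ S2 := by
        intro p hp
        rcases le_or_gt i1 p.1 with h | h
        · exact Finset.mem_union_right _ (Finset.mem_filter.mpr ⟨hp, h⟩)
        · rcases le_or_gt p.2 i1 with h2 | h2
          · exact Finset.mem_union_left _ (Finset.mem_filter.mpr ⟨hp, h2⟩)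
          · exfalso
            have hnc := hcr' p hp (i1, hi) hwS'
            have hp2 : p.2 ≤ hi := (hdom' p hp).2.2
            have hp2hi : p.2 = hi := by
              by_contra hne
              exact hnc ⟨h, h2, by omega⟩
            have : p ∈ T := Finset.mem_filter.mpr ⟨hp, hp2hi⟩
            exact absurd (hmin p this) (by omega)
      have hc1 : S1.card ≤ i1 - lo - 1 :=
        ih lo i1 S1 (by omega)
          (fun p hp => by
            have h := hdom' p (Finset.mem_filter.mp hp).1
            have := (Finset.mem_filter.mp hp).2; omega)
          (fun p hp q hq => hcr' p (Finset.mem_filter.mp hp).1 q (Finset.mem_filter.mp hq).1)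
      have hc2 : S2.card ≤ hi - i1 - 1 :=
        ih i1 hi S2 (by omega)
          (fun p hp => by
            have h := hdom' p (Finset.mem_filter.mp hp).1
            have := (Finset.mem_filter.mp hp).2; omega)
          (fun p hp q hq => hcr' p (Finset.mem_filter.mp hp).1 q (Finset.mem_filter.mp hq).1)
      have : S'.card ≤ S1.card + S2.card :=
        le_trans (Finset.card_le_card hcover) (Finset.card_union_le _ _)
      omega

lemma noncross_card_notfull (lo hi : ℕ) (S : Finset (ℕ × ℕ))
    (hdom : ∀ p ∈ S, lo ≤ p.1 ∧ p.1 + 2 ≤ p.2 ∧ p.2 ≤ hi)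
    (hcr : ∀ p ∈ S, ∀ q ∈ S, ¬(p.1 < q.1 ∧ q.1 < p.2 ∧ p.2 < q.2))
    (hnot : (lo, hi) ∉ S) :
    S.card ≤ hi - lo - 2 := by
  rcases S.eq_empty_or_nonempty with rfl | ⟨p₀, hp₀⟩
  · simp
  have hlohi : lo + 2 ≤ hi := by have := hdom p₀ hp₀; omega
  by_cases hT : ∀ p ∈ S, p.2 ≠ hi
  · have h1 : S.card ≤ (hi - 1) - lo - 1 :=
      noncross_card (hi - 1 - lo) lo (hi - 1) S (le_refl _)
        (fun p hp => by have h := hdom p hp; have := hT p hp; omega) hcr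
    omega
  · push_neg at hT
    obtain ⟨q₀, hq₀, hq₀2⟩ := hT
    set T := S.filter (fun p => p.2 = hi) with hTdef
    have hTne : T.Nonempty := ⟨q₀, Finset.mem_filter.mpr ⟨hq₀, hq₀2⟩⟩
    have hTim : (T.image Prod.fst).Nonempty := hTne.image _
    set i1 := (T.image Prod.fst).min' hTim with hi1def
    obtain ⟨w, hw, hw1⟩ := Finset.mem_image.mp ((T.image Prod.fst).min'_mem hTim)
    have hw2 : w.2 = hi := (Finset.mem_filter.mp hw).2
    have hwS : (i1, hi) ∈ S := by
      have : w = (i1, hi) := Prod.ext hw1 hw2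
      rw [← this]; exact (Finset.mem_filter.mp hw).1
    have hmin : ∀ p ∈ T, i1 ≤ p.1 :=
      fun p hp => Finset.min'_le _ _ (Finset.mem_image_of_mem _ hp)
    have hi1lo : lo < i1 := by
      have hlo : lo ≤ i1 := (hdom _ hwS).1
      rcases hlo.lt_or_eq with h | h
      · exact h
      · exact absurd (h ▸ hwS) hnot
    have hi1hi : i1 + 2 ≤ hi := (hdom _ hwS).2.1
    set S1 := S.filter (fun p => p.2 ≤ i1) with hS1
    set S2 := S.filter (fun p => i1 ≤ p.1) with hS2
    have hcover : S ⊆ S1 ∪ S2 := by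
      intro p hp
      rcases le_or_gt i1 p.1 with h | h
      · exact Finset.mem_union_right _ (Finset.mem_filter.mpr ⟨hp, h⟩)
      · rcases le_or_gt p.2 i1 with h2 | h2
        · exact Finset.mem_union_left _ (Finset.mem_filter.mpr ⟨hp, h2⟩)
        · exfalso
          have hnc := hcr p hp (i1, hi) hwS
          have hp2 : p.2 ≤ hi := (hdom p hp).2.2
          have hp2hi : p.2 = hi := by
            by_contra hne
            exact hnc ⟨h, h2, by omega⟩
          have : p ∈ T := Finset.mem_filter.mpr ⟨hp, hp2hi⟩
          exact absurd (hmin p this) (by omega)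
    have hc1 : S1.card ≤ i1 - lo - 1 :=
      noncross_card (i1 - lo) lo i1 S1 (le_refl _)
        (fun p hp => by
          have h := hdom p (Finset.mem_filter.mp hp).1
          have := (Finset.mem_filter.mp hp).2; omega)
        (fun p hp q hq => hcr p (Finset.mem_filter.mp hp).1 q (Finset.mem_filter.mp hq).1)
    have hc2 : S2.card ≤ hi - i1 - 1 :=
      noncross_card (hi - i1) i1 hi S2 (le_refl _)
        (fun p hp => by
          have h := hdom p (Finset.mem_filter.mp hp).1
          have := (Finset.mem_filter.mp hp).2; omega)
        (fun p hp q hq => hcr p (Finset.mem_filter.mp hp).1 q (Finset.mem_filter.mp hq).1)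
    have : S.card ≤ S1.card + S2.card :=
      le_trans (Finset.card_le_card hcover) (Finset.card_union_le _ _)
    omega

set_option maxHeartbeats 1000000 in
/-- For a circle partitioned into `n ≥ 3` arcs, the number of disjoint pairs of side disks
is at least `(n-2)(n-3)/2`. -/
theorem stmt_10 (O : EuclideanSpace ℝ (Fin 2)) (r : ℝ) (hr : 0 < r)
    (n : ℕ) (hn : 3 ≤ n) (θ : ℕ → ℝ) (hmono : StrictMono θ)
    (hper : ∀ m, θ (m + n) = θ m + 2 * π) :
    (n - 2) * (n - 3) / 2 ≤
      {p : ℕ × ℕ | p.1 < p.2 ∧ p.2 < n ∧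
        sideDisk O r (θ p.1) (θ (p.1 + 1)) ∩ sideDisk O r (θ p.2) (θ (p.2 + 1)) = ∅}.ncard := by
  classical
  set Pf : Finset (ℕ × ℕ) := (Finset.range n ×ˢ Finset.range n).filter (fun p => p.1 < p.2)
    with hPfdef
  have hPmem : ∀ p : ℕ × ℕ, p ∈ Pf ↔ p.1 < p.2 ∧ p.2 < n := by
    intro p
    simp only [hPfdef, Finset.mem_filter, Finset.mem_product, Finset.mem_range]
    omega
  set Tf : Finset (ℕ × ℕ) := Pf.filter (fun p =>
      sideDisk O r (θ p.1) (θ (p.1 + 1)) ∩ sideDisk O r (θ p.2) (θ (p.2 + 1)) = ∅) with hTfdef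
  set Bf : Finset (ℕ × ℕ) := Pf.filter (fun p =>
      ¬(sideDisk O r (θ p.1) (θ (p.1 + 1)) ∩ sideDisk O r (θ p.2) (θ (p.2 + 1)) = ∅)) with hBfdef
  -- the target set equals ↑Tf
  have hset : {p : ℕ × ℕ | p.1 < p.2 ∧ p.2 < n ∧
      sideDisk O r (θ p.1) (θ (p.1 + 1)) ∩ sideDisk O r (θ p.2) (θ (p.2 + 1)) = ∅}
      = (↑Tf : Set (ℕ × ℕ)) := by
    ext p
    simp only [Set.mem_setOf_eq, Finset.coe_filter, hTfdef, Set.mem_setOf_eq, hPmem]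
    tauto
  rw [hset, Set.ncard_coe_finset]
  -- cardinality of Pf
  have hPcard : Pf.card * 2 = n * (n - 1) := by
    have hP : Pf = (Finset.range n).biUnion (fun j => (Finset.range j).image (fun i => (i, j))) := by
      ext ⟨x, y⟩
      simp only [hPfdef, Finset.mem_filter, Finset.mem_product, Finset.mem_range,
        Finset.mem_biUnion, Finset.mem_image, Prod.mk.injEq]
      constructor
      · rintro ⟨⟨hx, hy⟩, hxy⟩; exact ⟨y, hy, x, hxy, rfl, rfl⟩
      · rintro ⟨j, hj, i, hij, rfl, rfl⟩; omega
    rw [hP, Finset.card_biUnion]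
    · have he : ∀ j, ((Finset.range j).image (fun i => (i, j))).card = j := by
        intro j
        rw [Finset.card_image_of_injective _ (fun a b h => (Prod.mk.injEq _ _ _ _).mp h |>.1)]
        exact Finset.card_range j
      simp only [he]
      exact Finset.sum_range_id_mul_two n
    · intro j₁ h₁ j₂ h₂ hne
      simp only [Finset.disjoint_left, Finset.mem_image, Finset.mem_range]
      rintro p ⟨i, hi, rfl⟩ ⟨i', hi', h⟩
      exact hne ((Prod.mk.injEq _ _ _ _).mp h).2.symm
  have hsplit : Tf.card + Bf.card = Pf.card :=
    Finset.card_filter_add_card_filter_not _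
  -- bound on bad pairs
  set Af : Finset (ℕ × ℕ) :=
    ((Finset.range (n - 1)).image (fun i => (i, i + 1))) ∪ {(0, n - 1)} with hAfdef
  set NBf : Finset (ℕ × ℕ) :=
    Bf.filter (fun p => p.1 + 2 ≤ p.2 ∧ ¬(p.1 = 0 ∧ p.2 = n - 1)) with hNBfdef
  have hBsub : Bf ⊆ Af ∪ NBf := by
    intro p hp
    have hpP : p.1 < p.2 ∧ p.2 < n := (hPmem p).mp (Finset.mem_of_mem_filter _ hp)
    by_cases h1 : p.2 = p.1 + 1
    · apply Finset.mem_union_left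
      apply Finset.mem_union_left
      apply Finset.mem_image.mpr
      exact ⟨p.1, Finset.mem_range.mpr (by omega), by rw [← h1]⟩
    · by_cases h2 : p.1 = 0 ∧ p.2 = n - 1
      · apply Finset.mem_union_left
        apply Finset.mem_union_right
        simp only [Finset.mem_singleton]
        rw [← h2.1, ← h2.2]
      · exact Finset.mem_union_right _
          (Finset.mem_filter.mpr ⟨hp, by omega, h2⟩)
  have hAcard : Af.card ≤ n := by
    calc Af.card ≤ ((Finset.range (n - 1)).image (fun i => (i, i + 1))).card
          + ({(0, n - 1)} : Finset (ℕ × ℕ)).card := Finset.card_union_le _ _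
      _ ≤ (n - 1) + 1 := by
          gcongr
          · calc _ ≤ (Finset.range (n-1)).card := Finset.card_image_le
              _ = n - 1 := Finset.card_range _
          · simp
      _ ≤ n := by omega
  have hNBcard : NBf.card ≤ n - 1 - 0 - 2 := by
    apply noncross_card_notfull
    · intro p hp
      have hpB := Finset.mem_of_mem_filter _ hp
      have hpP : p.1 < p.2 ∧ p.2 < n := (hPmem p).mp (Finset.mem_of_mem_filter _ hpB)
      have := (Finset.mem_filter.mp hp).2
      omega
    · intro p hp q hq
      rintro ⟨h1, h2, h3⟩
      have hpB := (Finset.mem_filter.mp (Finset.mem_of_mem_filter _ hp)).2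
      have hqB := (Finset.mem_filter.mp (Finset.mem_of_mem_filter _ hq)).2
      have hqP : q.1 < q.2 ∧ q.2 < n :=
        (hPmem q).mp (Finset.mem_of_mem_filter _ (Finset.mem_of_mem_filter _ hq))
      exact key_geom O hr hn θ hmono hper h1 h2 h3 hqP.2
        (Set.nonempty_iff_ne_empty.mpr hpB) (Set.nonempty_iff_ne_empty.mpr hqB)
    · intro hmem
      have := (Finset.mem_filter.mp hmem).2
      exact this.2 ⟨rfl, rfl⟩
  have hBcard : Bf.card ≤ n + (n - 3) := by
    calc Bf.card ≤ (Af ∪ NBf).card := Finset.card_le_card hBsub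
      _ ≤ Af.card + NBf.card := Finset.card_union_le _ _
      _ ≤ n + (n - 3) := by
          have : n - 1 - 0 - 2 = n - 3 := by omega
          omega
  -- final arithmetic
  obtain ⟨m, rfl⟩ : ∃ m, n = m + 3 := ⟨n - 3, by omega⟩
  have hP2 : Pf.card * 2 = (m + 1) * m + (4 * m + 6) := by
    rw [hPcard]
    have h1 : m + 3 - 1 = m + 2 := by omega
    rw [h1]; ring
  have h2T : (m + 1) * m ≤ 2 * Tf.card := by
    have hB : Bf.card ≤ 2 * m + 3 := by omega
    linarith [hsplit, hP2, hB]
  have hgoal : (m + 1) * m / 2 ≤ Tf.card := by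
    have := Nat.div_le_div_right (c := 2) h2T
    rwa [Nat.mul_div_cancel_left _ (by norm_num : 0 < 2)] at this
  rw [show m + 3 - 2 = m + 1 from by omega, show m + 3 - 3 = m from by omega]
  exact hgoal
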